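/- arXiv:1410.6339 — 3 statements merged into one kernel-verified Lean document; each statement's English description precedes it below -/
import Mathlib

section
/- Let δ ≥ 2, r ≥ 1, and let n, k be integers with r < k ≤ n − ⌈n/(r+δ−1)⌉·(δ−1). Then for every sufficiently large prime power q there exists a linear code over F_q of length n, dimension k, with all-symbol (r,δ)-locality and minimum Hamming distance d ≥ d_opt(n,k,r,δ) − δ + 1, where d_opt(n,k,r,δ) = n − k − (⌈k/r⌉ − 1)(δ−1) + 1; i.e., an almost optimal linear LRC exists. -/
open Finset Module


/-- A linear locally repairable code (LRC) over a finite field `F` with parameters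
`(n, k, d, r, δ)`: a `k`-dimensional subspace `C ⊆ F^n` whose minimum Hamming distance
is exactly `d`, such that every coordinate `j` has a repair set `S` with `j ∈ S`,
`|S| ≤ r + δ - 1`, and the projection of `C` to the coordinates in `S` has minimum
Hamming distance at least `δ`. -/
def IsLinearLRC (F : Type) [Field F] [Fintype F] [DecidableEq F]
    (n k d r δ : ℕ) : Prop :=
  ∃ C : Submodule F (Fin n → F),
    Module.finrank F ↥C = k ∧
    (∀ c ∈ C, c ≠ 0 → d ≤ hammingNorm c) ∧
    (∃ c ∈ C, c ≠ 0 ∧ hammingNorm c = d) ∧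
    (∀ j : Fin n, ∃ S : Finset (Fin n), j ∈ S ∧ S.card ≤ r + δ - 1 ∧
      ∀ c ∈ C, ∀ c' ∈ C, (∃ i ∈ S, c i ≠ c' i) →
        δ ≤ (S.filter (fun i => c i ≠ c' i)).card)

/-- The Singleton-type bound `d_opt(n,k,r,δ) = n - k - (⌈k/r⌉ - 1)(δ - 1) + 1`,
computed in `ℤ`, where `⌈k/r⌉ = (k + r - 1) / r`. -/
def doptZ (n k r δ : ℕ) : ℤ :=
  (n : ℤ) - k - ((((k + r - 1) / r : ℕ) : ℤ) - 1) * ((δ : ℤ) - 1) + 1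




lemma rowdiv {i b r : ℕ} (hr : 0 < r) (hb : b < r) : (i * r + b) / r = i := by
  rw [mul_comm, Nat.mul_add_div hr, Nat.div_eq_of_lt hb, add_zero]

lemma rowmod {i b r : ℕ} (hb : b < r) : (i * r + b) % r = b := by
  rw [mul_comm, Nat.mul_add_mod, Nat.mod_eq_of_lt hb]

section LRCAux
variable {F : Type} [Field F] [Fintype F] [DecidableEq F]

def encFun (g r K n : ℕ) (x : ℕ → F) (w : Fin K → F) (j : Fin n) : F :=
  ∑ b ∈ Finset.range r, x ((j : ℕ) % g) ^ b *
    (if h : (j : ℕ) / g * r + b < K then w ⟨(j : ℕ) / g * r + b, h⟩ else 0)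

def encL (g r K n : ℕ) (x : ℕ → F) : (Fin K → F) →ₗ[F] (Fin n → F) where
  toFun w := encFun g r K n x w
  map_add' w w' := by
    funext j
    simp only [encFun, Pi.add_apply]
    rw [← Finset.sum_add_distrib]
    refine Finset.sum_congr rfl fun b _ => ?_
    split
    · simp [Pi.add_apply, mul_add]
    · simp
  map_smul' a w := by
    funext j
    simp only [encFun, RingHom.id_apply, Pi.smul_apply, smul_eq_mul, Finset.mul_sum]
    refine Finset.sum_congr rfl fun b _ => ?_
    split
    · ring
    · ring

lemma encL_apply (g r K n : ℕ) (x : ℕ → F) (w : Fin K → F) (j : Fin n) :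
    encL g r K n x w j = ∑ b ∈ Finset.range r, x ((j : ℕ) % g) ^ b *
      (if h : (j : ℕ) / g * r + b < K then w ⟨(j : ℕ) / g * r + b, h⟩ else 0) := rfl

/-- If the message vanishes on all rows of group `j/g`, the codeword vanishes at `j`. -/
lemma encL_eq_zero_of_group_zero (g r K n : ℕ) (hr : 0 < r) (x : ℕ → F)
    (w : Fin K → F) (j : Fin n)
    (hw : ∀ a : Fin K, (a : ℕ) / r = (j : ℕ) / g → w a = 0) :
    encL g r K n x w j = 0 := by
  rw [encL_apply]
  refine Finset.sum_eq_zero fun b hb => ?_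
  rw [Finset.mem_range] at hb
  split
  · rename_i h
    rw [hw ⟨(j : ℕ) / g * r + b, h⟩ (rowdiv hr hb), mul_zero]
  · rw [mul_zero]

/-- Key elimination lemma: if a block codeword vanishes on a set `Q` of columns of group `i`,
and the message block is supported on its first `Q.card` rows, then the block is zero. -/
lemma lemA (g r K n : ℕ) (hg0 : 0 < g) (hr : 0 < r) (x : ℕ → F)
    (hx : ∀ b c : ℕ, b < g → c < g → x b = x c → b = c)
    (w : Fin K → F) (i : ℕ)
    (Q : Finset (Fin n)) (hQg : ∀ j ∈ Q, (j : ℕ) / g = i)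
    (hz : ∀ j ∈ Q, encL g r K n x w j = 0)
    (hsupp : ∀ a : Fin K, (a : ℕ) / r = i → Q.card ≤ (a : ℕ) % r → w a = 0) :
    ∀ a : Fin K, (a : ℕ) / r = i → w a = 0 := by
  set ki : ℕ := min r (K - i * r) with hki
  set e : ℕ := min Q.card ki with he
  obtain ⟨Q', hQ'sub, hQ'card⟩ :=
    Finset.exists_subset_card_eq (show e ≤ Q.card from min_le_left _ _)
  have hQ'g : ∀ j ∈ Q', (j : ℕ) / g = i := fun j hj => hQg j (hQ'sub hj)
  set σ := Q'.orderIsoOfFin hQ'card with hσ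
  set v : Fin e → F := fun c => x (((σ c : Fin n) : ℕ) % g) with hv
  have hvinj : Function.Injective v := by
    intro c₁ c₂ hc
    have h1 := hQ'g _ (σ c₁).2
    have h2 := hQ'g _ (σ c₂).2
    have hmod : ((σ c₁ : Fin n) : ℕ) % g = ((σ c₂ : Fin n) : ℕ) % g :=
      hx _ _ (Nat.mod_lt _ hg0) (Nat.mod_lt _ hg0) hc
    have hval : ((σ c₁ : Fin n) : ℕ) = ((σ c₂ : Fin n) : ℕ) := by
      have e1 := Nat.div_add_mod ((σ c₁ : Fin n) : ℕ) g
      have e2 := Nat.div_add_mod ((σ c₂ : Fin n) : ℕ) g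
      rw [h1] at e1; rw [h2] at e2
      omega
    exact σ.injective (Subtype.ext (Fin.ext hval))
  set Y : Fin e → F := fun b => if h : i * r + (b : ℕ) < K then w ⟨i * r + (b : ℕ), h⟩ else 0
    with hY
  have hsys : ∀ c : Fin e, ∑ b ∈ Finset.range e, v c ^ b *
      (if h : i * r + b < K then w ⟨i * r + b, h⟩ else 0) = 0 := by
    intro c
    have hjz := hz _ (hQ'sub (σ c).2)
    rw [encL_apply] at hjz
    have hjg : ((σ c : Fin n) : ℕ) / g = i := hQ'g _ (σ c).2
    rw [hjg] at hjz
    have hge : e ≤ r := le_trans (min_le_right _ _) (min_le_left _ _)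
    have hIco : ∑ b ∈ Finset.Ico e r, x (((σ c : Fin n) : ℕ) % g) ^ b *
        (if h : i * r + b < K then w ⟨i * r + b, h⟩ else 0) = 0 := by
      refine Finset.sum_eq_zero fun b hb => ?_
      rw [Finset.mem_Ico] at hb
      split
      · rename_i hbK
        rw [hsupp ⟨i * r + b, hbK⟩ (rowdiv hr hb.2) (by rw [rowmod hb.2]; omega), mul_zero]
      · rw [mul_zero]
    have hfull := Finset.sum_range_add_sum_Ico (fun b => x (((σ c : Fin n) : ℕ) % g) ^ b *
        (if h : i * r + b < K then w ⟨i * r + b, h⟩ else 0)) hge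
    rw [hIco, add_zero] at hfull
    rw [show v c = x (((σ c : Fin n) : ℕ) % g) from rfl, hfull]
    exact hjz
  have hY0 : Y = 0 := by
    have hdet : (Matrix.vandermonde v).det ≠ 0 := by
      rw [Matrix.det_vandermonde]
      refine Finset.prod_ne_zero_iff.2 fun a _ => Finset.prod_ne_zero_iff.2 fun b hb => ?_
      rw [Finset.mem_Ioi] at hb
      exact sub_ne_zero.2 fun hvv => absurd (hvinj hvv.symm) (ne_of_lt hb)
    have hmv : (Matrix.vandermonde v).mulVec Y = 0 := by
      funext c
      have : (Matrix.vandermonde v).mulVec Y c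
          = ∑ b : Fin e, v c ^ (b : ℕ) * Y b := by
        simp [Matrix.mulVec, dotProduct, Matrix.vandermonde]
      rw [this, hY]
      rw [Fin.sum_univ_eq_sum_range
        (fun b => v c ^ b * (if h : i * r + b < K then w ⟨i * r + b, h⟩ else 0)) e]
      exact hsys c
    have hinj := Matrix.mulVec_injective_iff_isUnit.2
      ((Matrix.isUnit_iff_isUnit_det _).2 (isUnit_iff_ne_zero.2 hdet))
    exact hinj (by rw [hmv, Matrix.mulVec_zero])
  intro a ha
  have hamod : (a : ℕ) % r < r := Nat.mod_lt _ hr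
  have haK := a.isLt
  have haeq : i * r + (a : ℕ) % r = (a : ℕ) := by
    have h := Nat.div_add_mod (a : ℕ) r
    rw [ha, mul_comm] at h; omega
  by_cases hbe : (a : ℕ) % r < e
  · have hz0 := congrFun hY0 ⟨(a : ℕ) % r, hbe⟩
    have hlt : i * r + (a : ℕ) % r < K := by omega
    simp only [hY, Pi.zero_apply] at hz0
    rw [dif_pos hlt] at hz0
    have : w a = w ⟨i * r + (a : ℕ) % r, hlt⟩ := by
      congr 1; exact Fin.ext haeq.symm
    rw [this, hz0]
  · push_neg at hbe
    by_cases hQb : Q.card ≤ (a : ℕ) % r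
    · exact hsupp a ha hQb
    · exfalso; omega
end LRCAux


lemma rowdiv' {i b r : ℕ} (hr : 0 < r) (hb : b < r) : (i * r + b) / r = i := by
  rw [mul_comm, Nat.mul_add_div hr, Nat.div_eq_of_lt hb, add_zero]

lemma rowmod' {i b r : ℕ} (hb : b < r) : (i * r + b) % r = b := by
  rw [mul_comm, Nat.mul_add_mod, Nat.mod_eq_of_lt hb]

/-- Combinatorial core: zero patterns cannot reduce the rank too much. -/
lemma comb (m r δ k ts : ℕ) (ki p : ℕ → ℕ)
    (hwaste : ∀ i, i < m → p i - ki i ≤ δ - 1)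
    (hki_full : ∀ i, i + 1 < m → ki i = r)
    (hsum : k + ts * (δ - 1) ≤ ∑ i ∈ Finset.range m, p i)
    (hkt : k ≤ ts * r) :
    k ≤ ∑ i ∈ Finset.range m, min (p i) (ki i) := by
  classical
  set ov := (Finset.range m).filter (fun i => ki i < p i) with hov
  set t := ov.card with ht
  have h1 : ∑ i ∈ Finset.range m, (p i - min (p i) (ki i)) ≤ t * (δ - 1) := by
    calc ∑ i ∈ Finset.range m, (p i - min (p i) (ki i))
        ≤ ∑ i ∈ Finset.range m, (if ki i < p i then δ - 1 else 0) := by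
          refine Finset.sum_le_sum fun i hi => ?_
          rw [Finset.mem_range] at hi
          by_cases hlt : ki i < p i
          · rw [if_pos hlt]
            have := hwaste i hi; omega
          · rw [if_neg hlt]; omega
      _ = ∑ i ∈ ov, (δ - 1) := (Finset.sum_filter _ _).symm
      _ = t * (δ - 1) := by rw [Finset.sum_const, smul_eq_mul]
  have h2 : ∑ i ∈ Finset.range m, p i
      ≤ (∑ i ∈ Finset.range m, min (p i) (ki i)) + t * (δ - 1) := by
    calc ∑ i ∈ Finset.range m, p i
        ≤ ∑ i ∈ Finset.range m, (min (p i) (ki i) + (p i - min (p i) (ki i))) :=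
          Finset.sum_le_sum fun i _ => by omega
      _ = (∑ i ∈ Finset.range m, min (p i) (ki i))
            + ∑ i ∈ Finset.range m, (p i - min (p i) (ki i)) := Finset.sum_add_distrib
      _ ≤ _ := by omega
  by_cases htts : t ≤ ts
  · have h3 : t * (δ - 1) ≤ ts * (δ - 1) := Nat.mul_le_mul_right _ htts
    omega
  · push_neg at htts
    have h4 : ∑ i ∈ ov.erase (m - 1), ki i ≤ ∑ i ∈ Finset.range m, min (p i) (ki i) := by
      have hsub : ov.erase (m - 1) ⊆ Finset.range m :=
        (Finset.erase_subset _ _).trans (Finset.filter_subset _ _)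
      have hle : ∀ i ∈ ov.erase (m - 1), ki i ≤ min (p i) (ki i) := by
        intro i hi
        have hmem := Finset.mem_of_mem_erase hi
        rw [hov, Finset.mem_filter] at hmem
        omega
      calc ∑ i ∈ ov.erase (m - 1), ki i
          ≤ ∑ i ∈ ov.erase (m - 1), min (p i) (ki i) := Finset.sum_le_sum hle
        _ ≤ _ := Finset.sum_le_sum_of_subset hsub
    have h5 : (t - 1) * r ≤ ∑ i ∈ ov.erase (m - 1), ki i := by
      have hcard : t - 1 ≤ (ov.erase (m - 1)).card := Finset.pred_card_le_card_erase
      have hconst : ∀ i ∈ ov.erase (m - 1), ki i = r := by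
        intro i hi
        have hne := Finset.ne_of_mem_erase hi
        have hmem := Finset.mem_of_mem_erase hi
        rw [hov, Finset.mem_filter, Finset.mem_range] at hmem
        exact hki_full i (by omega)
      calc (t - 1) * r ≤ (ov.erase (m - 1)).card * r := Nat.mul_le_mul_right _ hcard
        _ = ∑ _i ∈ ov.erase (m - 1), r := by rw [Finset.sum_const, smul_eq_mul]
        _ = ∑ i ∈ ov.erase (m - 1), ki i :=
            Finset.sum_congr rfl fun i hi => (hconst i hi).symm
    have h6 : ts * r ≤ (t - 1) * r := Nat.mul_le_mul_right _ (by omega)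
    omega

/-- Fiber counting for the "determined rows" set. -/
lemma fibercount (rp m K : ℕ) (hr : 0 < rp) (q : ℕ → ℕ)
    (hq : ∀ i, i < m → q i ≤ min rp (K - i * rp)) (hKm : K ≤ m * rp) :
    (Finset.univ.filter (fun a : Fin K => (a : ℕ) % rp < q ((a : ℕ) / rp))).card
      = ∑ i ∈ Finset.range m, q i := by
  classical
  rw [Finset.card_eq_sum_card_fiberwise
    (f := fun a : Fin K => (a : ℕ) / rp) (t := Finset.range m)
    (fun a _ => by
      simp only [Finset.coe_range, Set.mem_Iio]
      rw [Nat.div_lt_iff_lt_mul hr]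
      exact lt_of_lt_of_le a.isLt hKm)]
  refine Finset.sum_congr rfl fun i hi => ?_
  rw [Finset.mem_range] at hi
  rw [← Finset.card_range (q i)]
  have h1 := hq i hi
  refine Finset.card_bij' (fun a _ => (a : ℕ) % rp)
    (fun b hb => ⟨i * rp + b, by rw [Finset.mem_range] at hb; omega⟩) ?_ ?_ ?_ ?_
  · intro a ha
    simp only [Finset.mem_filter, Finset.mem_univ, true_and] at ha
    rw [Finset.mem_range]
    exact ha.2 ▸ ha.1
  · intro b hb
    rw [Finset.mem_range] at hb
    have hblt : b < rp := by omega
    simp only [Finset.mem_filter, Finset.mem_univ, true_and]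
    refine ⟨?_, ?_⟩
    · show (i * rp + b) % rp < q ((i * rp + b) / rp)
      rw [rowmod' hblt, rowdiv' hr hblt]; exact hb
    · show (i * rp + b) / rp = i
      exact rowdiv' hr hblt
  · intro a ha
    simp only [Finset.mem_filter, Finset.mem_univ, true_and] at ha
    apply Fin.ext
    show i * rp + (a : ℕ) % rp = (a : ℕ)
    have hd := Nat.div_add_mod (a : ℕ) rp
    rw [ha.2, mul_comm] at hd
    omega
  · intro b hb
    rw [Finset.mem_range] at hb
    have hblt : b < rp := by omega
    show (i * rp + b) % rp = b
    exact rowmod' hblt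


section Avoid
variable {F : Type} [Field F] [Fintype F] [DecidableEq F]

/-- Over a large enough finite field, there is a `k`-dimensional subspace intersecting
each member of a small family of low-dimensional subspaces trivially. -/
lemma avoid (K k : ℕ) (hkK : k ≤ K) (fam : Finset (Submodule F (Fin K → F)))
    (hdim : ∀ V ∈ fam, Module.finrank F ↥V ≤ K - k)
    (hcard : fam.card + 1 < Fintype.card F) :
    ∃ W : Submodule F (Fin K → F), Module.finrank F ↥W = k ∧ ∀ V ∈ fam, W ⊓ V = ⊥ := by
  classical
  suffices h : ∀ j, j ≤ k → ∃ W : Submodule F (Fin K → F),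
      Module.finrank F ↥W = j ∧ ∀ V ∈ fam, W ⊓ V = ⊥ from h k le_rfl
  intro j
  induction j with
  | zero =>
    intro _
    exact ⟨⊥, finrank_bot F _, fun V _ => bot_inf_eq V⟩
  | succ j ih =>
    intro hj
    obtain ⟨W, hWrank, hWdisj⟩ := ih (by omega)
    -- find a vector outside W and outside every W ⊔ V
    have hq2 : 2 ≤ Fintype.card F := by
      have := fam.card.zero_le; omega
    have hKpos : 0 < K := by omega
    set famW : Finset (Submodule F (Fin K → F)) :=
      insert W (fam.image (fun V => W ⊔ V)) with hfamW
    have hdimW : ∀ U ∈ famW, Module.finrank F ↥U ≤ K - 1 := by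
      intro U hU
      rw [hfamW, Finset.mem_insert] at hU
      rcases hU with h | h
      · subst h; omega
      · obtain ⟨V, hV, rfl⟩ := Finset.mem_image.1 h
        have h1 : Module.finrank F ↥(W ⊔ V) ≤
            Module.finrank F ↥W + Module.finrank F ↥V :=
          Submodule.finrank_add_le_finrank_add_finrank W V
        have h2 := hdim V hV
        omega
    have hcardW : famW.card ≤ fam.card + 1 := by
      calc famW.card ≤ (fam.image (fun V => W ⊔ V)).card + 1 := Finset.card_insert_le _ _
        _ ≤ fam.card + 1 := by
          have := Finset.card_image_le (s := fam) (f := fun V => W ⊔ V)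
          omega
    have hex : ∃ v : Fin K → F, ∀ U ∈ famW, v ∉ U := by
      by_contra hcon
      push_neg at hcon
      have hsub : (Finset.univ : Finset (Fin K → F)) ⊆
          famW.biUnion (fun U => Finset.univ.filter (· ∈ U)) := by
        intro v _
        obtain ⟨U, hU, hvU⟩ := hcon v
        exact Finset.mem_biUnion.2 ⟨U, hU, Finset.mem_filter.2 ⟨Finset.mem_univ _, hvU⟩⟩
      have hcount := Finset.card_le_card hsub
      rw [Finset.card_univ, Fintype.card_fun, Fintype.card_fin] at hcount
      have hbig : (famW.biUnion (fun U => Finset.univ.filter (· ∈ U))).card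
          ≤ famW.card * Fintype.card F ^ (K - 1) := by
        refine le_trans (Finset.card_biUnion_le) ?_
        rw [← smul_eq_mul, ← Finset.sum_const]
        refine Finset.sum_le_sum fun U hU => ?_
        rw [← Fintype.card_subtype]
        have hUcard : Fintype.card {x // x ∈ U} = Fintype.card F ^ Module.finrank F ↥U :=
          card_eq_pow_finrank
        rw [hUcard]
        exact Nat.pow_le_pow_right (by omega) (hdimW U hU)
      have hX : 0 < Fintype.card F ^ (K - 1) := Nat.pow_pos (by omega)
      have hlt : famW.card * Fintype.card F ^ (K - 1) < Fintype.card F ^ K := by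
        calc famW.card * Fintype.card F ^ (K - 1)
            < Fintype.card F * Fintype.card F ^ (K - 1) :=
              (Nat.mul_lt_mul_right hX).2 (by omega)
          _ = Fintype.card F ^ K := by
              rw [mul_comm, ← pow_succ]
              congr 1
              omega
      omega
    obtain ⟨v, hv⟩ := hex
    have hvW : v ∉ W := hv W (Finset.mem_insert_self _ _)
    have hvne : v ≠ 0 := fun h => hvW (h ▸ W.zero_mem)
    refine ⟨W ⊔ F ∙ v, ?_, ?_⟩
    · have hle : Module.finrank F ↥(W ⊔ F ∙ v) ≤ j + 1 := by
        have h1 := Submodule.finrank_add_le_finrank_add_finrank W (F ∙ v)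
        rw [finrank_span_singleton hvne, hWrank] at h1
        exact h1
      have hlt : W < W ⊔ F ∙ v := by
        refine lt_of_le_of_ne le_sup_left fun h => ?_
        exact hvW (h ▸ (le_sup_right (a := W)) (Submodule.mem_span_singleton_self v))
      have := Submodule.finrank_lt_finrank_of_lt hlt
      omega
    · intro V hV
      rw [eq_bot_iff]
      intro y hy
      obtain ⟨hyW', hyV⟩ := Submodule.mem_inf.1 hy
      obtain ⟨w, hw, z, hz, rfl⟩ := Submodule.mem_sup.1 hyW'
      obtain ⟨a, rfl⟩ := Submodule.mem_span_singleton.1 hz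
      by_cases ha : a = 0
      · subst ha
        rw [zero_smul, add_zero] at hyV ⊢
        have : w ∈ W ⊓ V := Submodule.mem_inf.2 ⟨hw, hyV⟩
        rw [hWdisj V hV] at this
        exact this
      · exfalso
        apply hv (W ⊔ V) (Finset.mem_insert.2 (Or.inr (Finset.mem_image_of_mem _ hV)))
        have hmem : w + a • v ∈ W ⊔ V := (le_sup_right (a := W)) hyV
        have hwmem : w ∈ W ⊔ V := (le_sup_left (b := V)) hw
        have : a • v ∈ W ⊔ V := by
          have := Submodule.sub_mem _ hmem hwmem
          simpa using this
        have := Submodule.smul_mem _ a⁻¹ this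
        rwa [smul_smul, inv_mul_cancel₀ ha, one_smul] at this
end Avoid


theorem stmt_8 (n k r δ : ℕ) (hδ : 2 ≤ δ) (hr : 1 ≤ r) (hrk : r < k)
    (hkn : k ≤ n - ((n + (r + δ - 1) - 1) / (r + δ - 1)) * (δ - 1)) :
    ∃ q₀ : ℕ, ∀ (F : Type) [Field F] [Fintype F] [DecidableEq F],
      q₀ ≤ Fintype.card F →
      ∃ d : ℕ, IsLinearLRC F n k d r δ ∧
        doptZ n k r δ - ((δ : ℤ) - 1) ≤ (d : ℤ) := by
  classical
  refine ⟨2 ^ n + n + 2, ?_⟩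
  intro F _ _ _ hF
  -- ### numeric setup
  set g := r + δ - 1 with hgdef
  set m := (n + g - 1) / g with hmdef
  have hgpos : 0 < g := by omega
  have hrpos : 0 < r := hr
  have hk2 : 2 ≤ k := by omega
  -- ceiling division facts for m
  have hmceil := Nat.div_add_mod (n + g - 1) g
  rw [← hmdef] at hmceil
  have hmceil2 : (n + g - 1) % g < g := Nat.mod_lt _ hgpos
  have hnpos : 0 < n := by omega
  have hm1 : 1 ≤ m := (Nat.one_le_div_iff hgpos).2 (by omega)
  have hcomm_gm : m * g = g * m := Nat.mul_comm _ _
  have hmub : n ≤ m * g := by omega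
  have hsubmul : (m - 1) * g = m * g - g := by rw [Nat.sub_mul, one_mul]
  have hmlb : (m - 1) * g < n := by omega
  have hkmn : k + m * (δ - 1) ≤ n := by omega
  set s := n - (m - 1) * g with hsdef
  have hs1 : 1 ≤ s := by omega
  have hsg : s ≤ g := by omega
  set ks := s - (δ - 1) with hksdef
  set K := (m - 1) * r + ks with hKdef
  have hgsplit : g = r + (δ - 1) := by omega
  have hdist : (m - 1) * g = (m - 1) * r + (m - 1) * (δ - 1) := by
    rw [hgsplit, Nat.mul_add]
  have hsub1 : (m - 1) * (δ - 1) = m * (δ - 1) - (δ - 1) := by rw [Nat.sub_one_mul]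
  have hsub2 : (m - 1) * r = m * r - r := by rw [Nat.sub_one_mul]
  have hmd1 : δ - 1 ≤ m * (δ - 1) := by
    calc δ - 1 = 1 * (δ - 1) := (one_mul _).symm
      _ ≤ m * (δ - 1) := Nat.mul_le_mul_right _ hm1
  have hr1 : r ≤ m * r := by
    calc r = 1 * r := (one_mul _).symm
      _ ≤ m * r := Nat.mul_le_mul_right _ hm1
  have hkK : k ≤ K := by omega
  have hksr : ks ≤ r := by omega
  have hKmr : K ≤ m * r := by omega
  have hKpos : 0 < K := by omega
  set ts := (k + r - 1) / r with htsdef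
  have htsceil := Nat.div_add_mod (k + r - 1) r
  rw [← htsdef] at htsceil
  have htsceil2 : (k + r - 1) % r < r := Nat.mod_lt _ hrpos
  have hcomm_ts : ts * r = r * ts := Nat.mul_comm _ _
  have hkts : k ≤ ts * r := by omega
  have hts1 : 1 ≤ ts := by
    rw [htsdef]
    exact (Nat.one_le_div_iff hrpos).2 (by omega)
  set B := k + ts * (δ - 1) with hBdef
  have hgn : g < n := by omega
  -- ### nodes
  have hcg : g ≤ Fintype.card F := by
    have : 0 ≤ 2 ^ n := Nat.zero_le _
    omega
  obtain ⟨emb⟩ : Nonempty (Fin g ↪ F) := by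
    apply Function.Embedding.nonempty_of_card_le
    rwa [Fintype.card_fin]
  set xx : ℕ → F := fun t => if h : t < g then emb ⟨t, h⟩ else 0 with hxxdef
  have hxx : ∀ b c : ℕ, b < g → c < g → xx b = xx c → b = c := by
    intro b c hb hc heq
    rw [hxxdef] at heq
    simp only [dif_pos hb, dif_pos hc] at heq
    exact Fin.mk.inj_iff.1 (emb.injective heq)
  set E := encL g r K n xx with hE
  -- ### row and column helper facts
  have hrowlt : ∀ a : Fin K, (a : ℕ) / r < m := by
    intro a
    rw [Nat.div_lt_iff_lt_mul hrpos]
    exact lt_of_lt_of_le a.isLt (by omega)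
  have hrowki : ∀ a : Fin K, (a : ℕ) % r < min r (K - (a : ℕ) / r * r) := by
    intro a
    have hd := Nat.div_add_mod (a : ℕ) r
    have hmlt := Nat.mod_lt (a : ℕ) hrpos
    have hc : (a : ℕ) / r * r = r * ((a : ℕ) / r) := Nat.mul_comm _ _
    have haK := a.isLt
    omega
  have hcolbound : ∀ i c : ℕ, i + 1 < m → c < g → i * g + c < n := by
    intro i c h1 h2
    have h3 : (i + 1) * g ≤ (m - 1) * g := Nat.mul_le_mul_right _ (by omega)
    have h4 : (i + 1) * g = i * g + g := by rw [Nat.succ_mul]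
    omega
  have hcollast : ∀ c : ℕ, c < s → (m - 1) * g + c < n := by
    intro c hc; omega
  have hlastki : K - (m - 1) * r = ks := by omega
  -- each live group has at least `ki i + (δ - 1)` columns
  have hQbig : ∀ i : ℕ, i < m → (i + 1 < m ∨ 0 < ks) →
      min r (K - i * r) + (δ - 1) ≤
      (Finset.univ.filter (fun j : Fin n => (j : ℕ) / g = i)).card := by
    intro i hi hlive
    have hcoltop : ∀ c : ℕ, c < min r (K - i * r) + (δ - 1) → i * g + c < n := by
      intro c hc
      rcases Nat.lt_or_ge (i + 1) m with h | h
      · exact hcolbound i c h (by omega)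
      · obtain rfl : i = m - 1 := by omega
        have hks : 0 < ks := hlive.resolve_left (by omega)
        refine hcollast c ?_
        omega
    have hmaps : ∀ c ∈ Finset.range (min r (K - i * r) + (δ - 1)),
        (fun c : ℕ => if h : i * g + c < n then (⟨i * g + c, h⟩ : Fin n)
          else ⟨0, hnpos⟩) c ∈
        (Finset.univ.filter (fun j : Fin n => (j : ℕ) / g = i)) := by
      intro c hc
      rw [Finset.mem_range] at hc
      have hlt := hcoltop c hc
      simp only [dif_pos hlt, Finset.mem_filter, Finset.mem_univ, true_and]
      show (i * g + c) / g = i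
      exact rowdiv' hgpos (by omega)
    have hinj : Set.InjOn (fun c : ℕ => if h : i * g + c < n then (⟨i * g + c, h⟩ : Fin n)
        else ⟨0, hnpos⟩) (Finset.range (min r (K - i * r) + (δ - 1))) := by
      intro c1 h1 c2 h2 heq
      rw [Finset.coe_range, Set.mem_Iio] at h1 h2
      have hl1 := hcoltop c1 h1
      have hl2 := hcoltop c2 h2
      simp only [dif_pos hl1, dif_pos hl2, Fin.mk.injEq] at heq
      omega
    have := Finset.card_le_card_of_injOn _ hmaps hinj
    rwa [Finset.card_range] at this
  -- group sizes from above
  have hGub : ∀ (P : Finset (Fin n)) (i : ℕ),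
      (P.filter (fun j : Fin n => (j : ℕ) / g = i)).card ≤ g := by
    intro P i
    have hmaps : ∀ j ∈ P.filter (fun j : Fin n => (j : ℕ) / g = i),
        (j : ℕ) % g ∈ Finset.range g := by
      intro j hj
      rw [Finset.mem_range]
      exact Nat.mod_lt _ hgpos
    have hinj : Set.InjOn (fun j : Fin n => (j : ℕ) % g)
        (P.filter (fun j : Fin n => (j : ℕ) / g = i)) := by
      intro j1 h1 j2 h2 heq
      simp only [Finset.coe_filter, Set.mem_setOf_eq] at h1 h2
      have heq2 : (j1 : ℕ) % g = (j2 : ℕ) % g := heq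
      have hd1 := Nat.div_add_mod (j1 : ℕ) g
      have hd2 := Nat.div_add_mod (j2 : ℕ) g
      rw [h1.2] at hd1
      rw [h2.2] at hd2
      exact Fin.ext (by omega)
    have := Finset.card_le_card_of_injOn _ hmaps hinj
    rwa [Finset.card_range] at this
  have hGlast : ∀ (P : Finset (Fin n)),
      (P.filter (fun j : Fin n => (j : ℕ) / g = m - 1)).card ≤ s := by
    intro P
    have hmaps : ∀ j ∈ P.filter (fun j : Fin n => (j : ℕ) / g = m - 1),
        (j : ℕ) - (m - 1) * g ∈ Finset.range s := by
      intro j hj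
      rw [Finset.mem_filter] at hj
      have hd := Nat.div_add_mod (j : ℕ) g
      rw [hj.2] at hd
      have hcm : g * (m - 1) = (m - 1) * g := Nat.mul_comm _ _
      have hjn := j.isLt
      rw [Finset.mem_range]
      omega
    have hinj : Set.InjOn (fun j : Fin n => (j : ℕ) - (m - 1) * g)
        (P.filter (fun j : Fin n => (j : ℕ) / g = m - 1)) := by
      intro j1 h1 j2 h2 heq
      simp only [Finset.coe_filter, Set.mem_setOf_eq] at h1 h2
      have heq2 : (j1 : ℕ) - (m - 1) * g = (j2 : ℕ) - (m - 1) * g := heq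
      have hd1 := Nat.div_add_mod (j1 : ℕ) g
      have hd2 := Nat.div_add_mod (j2 : ℕ) g
      rw [h1.2] at hd1
      rw [h2.2] at hd2
      have hcm : g * (m - 1) = (m - 1) * g := Nat.mul_comm _ _
      exact Fin.ext (by omega)
    have := Finset.card_le_card_of_injOn _ hmaps hinj
    rwa [Finset.card_range] at this
  -- ### injectivity of the encoder
  have hEinj : Function.Injective E := by
    rw [← LinearMap.ker_eq_bot, LinearMap.ker_eq_bot']
    intro w hw
    funext a
    show w a = (0 : Fin K → F) a
    rw [Pi.zero_apply]
    set i := (a : ℕ) / r with hidef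
    have him := hrowlt a
    have hki := hrowki a
    by_cases hdead : i + 1 = m ∧ ks = 0
    · exfalso
      have : K = (m - 1) * r := by omega
      have : (a : ℕ) < (m - 1) * r := by omega
      have : (a : ℕ) / r < m - 1 := by
        rw [Nat.div_lt_iff_lt_mul hrpos]
        omega
      omega
    · have hlive : i + 1 < m ∨ 0 < ks := by omega
      refine lemA g r K n hgpos hrpos xx hxx w i
        (Finset.univ.filter (fun j : Fin n => (j : ℕ) / g = i))
        (fun j hj => (Finset.mem_filter.1 hj).2)
        (fun j hj => by rw [← hE]; exact congrFun hw j)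
        ?_ a hidef.symm
      intro b hb hcard
      exfalso
      have h1 := hQbig i him hlive
      have h2 := hrowki b
      rw [hb] at h2
      omega
  -- ### dimension bound for vanishing subspaces
  set VP : Finset (Fin n) → Submodule F (Fin K → F) := fun P =>
    ⨅ j ∈ P, LinearMap.ker ((LinearMap.proj j).comp E) with hVPdef
  have hVPmem : ∀ (P : Finset (Fin n)) (w : Fin K → F),
      w ∈ VP P ↔ ∀ j ∈ P, E w j = 0 := by
    intro P w
    simp only [hVPdef, Submodule.mem_iInf, LinearMap.mem_ker, LinearMap.comp_apply,
      LinearMap.proj_apply]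
  have hVPdim : ∀ P : Finset (Fin n), P.card = B →
      Module.finrank F ↥(VP P) ≤ K - k := by
    intro P hPcard
    set q : ℕ → ℕ := fun i =>
      min ((P.filter (fun j : Fin n => (j : ℕ) / g = i)).card) (min r (K - i * r)) with hqdef
    set A := Finset.univ.filter
      (fun a : Fin K => q ((a : ℕ) / r) ≤ (a : ℕ) % r) with hAdef
    -- injection into coordinates of A
    set φ : ↥(VP P) →ₗ[F] ({x // x ∈ A} → F) :=
      (LinearMap.funLeft F F (fun a : {x // x ∈ A} => (a : Fin K))).comp
        (VP P).subtype with hφdef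
    have hφinj : Function.Injective φ := by
      rw [← LinearMap.ker_eq_bot, LinearMap.ker_eq_bot']
      intro w hw0
      have hwP := w.2
      rw [hVPmem] at hwP
      apply Subtype.ext
      funext a
      show (w : Fin K → F) a = (0 : Fin K → F) a
      rw [Pi.zero_apply]
      set i := (a : ℕ) / r with hidef
      refine lemA g r K n hgpos hrpos xx hxx (w : Fin K → F) i
        (P.filter (fun j : Fin n => (j : ℕ) / g = i))
        (fun j hj => (Finset.mem_filter.1 hj).2)
        (fun j hj => by rw [← hE]; exact hwP j (Finset.mem_filter.1 hj).1)
        ?_ a hidef.symm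
      intro b hb hcard
      have hbA : b ∈ A := by
        rw [hAdef, Finset.mem_filter]
        refine ⟨Finset.mem_univ _, ?_⟩
        rw [hb]
        calc q i ≤ (P.filter (fun j : Fin n => (j : ℕ) / g = i)).card := min_le_left _ _
          _ ≤ (b : ℕ) % r := hcard
      have := congrFun hw0 ⟨b, hbA⟩
      exact this
    have hd1 : Module.finrank F ↥(VP P) ≤ Module.finrank F ({x // x ∈ A} → F) :=
      LinearMap.finrank_le_finrank_of_injective hφinj
    rw [Module.finrank_pi, Fintype.card_coe] at hd1
    -- now bound A.card
    have hsplitA := Finset.card_filter_add_card_filter_not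
      (s := (Finset.univ : Finset (Fin K)))
      (p := fun a : Fin K => q ((a : ℕ) / r) ≤ (a : ℕ) % r)
    rw [Finset.card_univ, Fintype.card_fin] at hsplitA
    have hnegA : Finset.univ.filter (fun a : Fin K => ¬ q ((a : ℕ) / r) ≤ (a : ℕ) % r)
        = Finset.univ.filter (fun a : Fin K => (a : ℕ) % r < q ((a : ℕ) / r)) := by
      apply Finset.filter_congr
      intro a _
      simp [Nat.not_le]
    rw [hnegA] at hsplitA
    have hfc := fibercount r m K hrpos q (fun i _ => min_le_right _ _) hKmr
    -- combinatorial bound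
    have hcomb : k ≤ ∑ i ∈ Finset.range m, q i := by
      have hqmin : ∀ i : ℕ, q i =
          min ((P.filter (fun j : Fin n => (j : ℕ) / g = i)).card) (min r (K - i * r)) :=
        fun i => rfl
      refine comb m r δ k ts (fun i => min r (K - i * r))
        (fun i => (P.filter (fun j : Fin n => (j : ℕ) / g = i)).card) ?_ ?_ ?_ hkts
      · -- waste bound
        intro i hi
        show (P.filter (fun j : Fin n => (j : ℕ) / g = i)).card - min r (K - i * r) ≤ δ - 1
        rcases Nat.lt_or_ge (i + 1) m with h | h
        · have h1 := hGub P i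
          have h2 : (i + 1) * r ≤ (m - 1) * r := Nat.mul_le_mul_right _ (by omega)
          have h3 : (i + 1) * r = i * r + r := by rw [Nat.succ_mul]
          omega
        · obtain rfl : i = m - 1 := by omega
          have h1 := hGlast P
          omega
      · -- full groups
        intro i hi
        show min r (K - i * r) = r
        have h2 : (i + 1) * r ≤ (m - 1) * r := Nat.mul_le_mul_right _ (by omega)
        have h3 : (i + 1) * r = i * r + r := by rw [Nat.succ_mul]
        omega
      · -- total count
        show k + ts * (δ - 1) ≤ ∑ i ∈ Finset.range m,
          (P.filter (fun j : Fin n => (j : ℕ) / g = i)).card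
        have hPsum : P.card = ∑ i ∈ Finset.range m,
            (P.filter (fun j : Fin n => (j : ℕ) / g = i)).card := by
          refine Finset.card_eq_sum_card_fiberwise fun j _ => ?_
          simp only [Finset.coe_range, Set.mem_Iio]
          rw [Nat.div_lt_iff_lt_mul hgpos]
          exact lt_of_lt_of_le j.isLt hmub
        rw [← hPsum, hPcard]
    rw [← hAdef] at hsplitA
    omega
  -- ### choose the generic subspace W
  set fam := (Finset.powersetCard B (Finset.univ : Finset (Fin n))).image VP with hfamdef
  have hfamdim : ∀ V ∈ fam, Module.finrank F ↥V ≤ K - k := by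
    intro V hV
    rw [hfamdef, Finset.mem_image] at hV
    obtain ⟨P, hP, rfl⟩ := hV
    rw [Finset.mem_powersetCard_univ] at hP
    exact hVPdim P hP
  have hfamcard : fam.card + 1 < Fintype.card F := by
    have h1 : fam.card ≤ (Finset.powersetCard B (Finset.univ : Finset (Fin n))).card :=
      Finset.card_image_le
    rw [Finset.card_powersetCard, Finset.card_univ, Fintype.card_fin] at h1
    have h2 : n.choose B ≤ 2 ^ n := by
      rcases le_or_gt B n with h | h
      · calc n.choose B ≤ ∑ i ∈ Finset.range (n + 1), n.choose i :=
            Finset.single_le_sum (fun i _ => Nat.zero_le _) (Finset.mem_range.2 (by omega))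
          _ = 2 ^ n := Nat.sum_range_choose n
      · rw [Nat.choose_eq_zero_of_lt h]
        exact Nat.zero_le _
    omega
  obtain ⟨W, hWrank, hWdisj⟩ := avoid K k hkK fam hfamdim hfamcard
  -- ### the code
  set C := Submodule.map E W with hCdef
  have hCrank : Module.finrank F ↥C = k := by
    rw [hCdef, ← hWrank]
    exact (LinearEquiv.finrank_eq (Submodule.equivMapOfInjective E hEinj W)).symm
  have hCmem : ∀ c, c ∈ C ↔ ∃ w ∈ W, E w = c := fun c => Submodule.mem_map
  -- ### weight bound: every nonzero codeword has weight ≥ n + 1 - B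
  have hzcard : ∀ c : Fin n → F, hammingNorm c
      + (Finset.univ.filter (fun t : Fin n => c t = 0)).card = n := by
    intro c
    have h := Finset.card_filter_add_card_filter_not
      (s := (Finset.univ : Finset (Fin n))) (p := fun t => c t ≠ 0)
    rw [Finset.card_univ, Fintype.card_fin] at h
    have h2 : Finset.univ.filter (fun t : Fin n => ¬ c t ≠ 0)
        = Finset.univ.filter (fun t : Fin n => c t = 0) := by
      apply Finset.filter_congr
      intro t _
      simp
    rw [h2] at h
    have h3 : hammingNorm c = (Finset.univ.filter (fun t : Fin n => c t ≠ 0)).card := rfl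
    omega
  have hwt : ∀ c ∈ C, c ≠ 0 → n + 1 ≤ hammingNorm c + B := by
    intro c hc hc0
    by_contra hcon
    push_neg at hcon
    obtain ⟨w, hwW, rfl⟩ := (hCmem c).1 hc
    have hz := hzcard (E w)
    have hBle : B ≤ (Finset.univ.filter (fun t : Fin n => E w t = 0)).card := by omega
    obtain ⟨P, hPsub, hPcard⟩ := Finset.exists_subset_card_eq hBle
    have hwVP : w ∈ VP P := by
      rw [hVPmem]
      intro j hj
      have := hPsub hj
      rw [Finset.mem_filter] at this
      exact this.2
    have hVPfam : VP P ∈ fam := by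
      rw [hfamdef, Finset.mem_image]
      exact ⟨P, Finset.mem_powersetCard_univ.2 hPcard, rfl⟩
    have : w ∈ W ⊓ VP P := Submodule.mem_inf.2 ⟨hwW, hwVP⟩
    rw [hWdisj _ hVPfam] at this
    rw [Submodule.mem_bot] at this
    exact hc0 (by rw [this, map_zero])
  -- ### minimum distance
  have hc0ex : ∃ c ∈ C, c ≠ 0 := by
    have hWne : W ≠ ⊥ := by
      intro h
      rw [h, finrank_bot] at hWrank
      omega
    obtain ⟨w, hwW, hw0⟩ := Submodule.exists_mem_ne_zero_of_ne_bot hWne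
    refine ⟨E w, (hCmem _).2 ⟨w, hwW, rfl⟩, fun h => hw0 (hEinj (by rw [h, map_zero]))⟩
  set codeNZ := Finset.univ.filter (fun c : Fin n → F => c ∈ C ∧ c ≠ 0) with hcodeNZ
  have hcodeNZne : (codeNZ.image hammingNorm).Nonempty := by
    obtain ⟨c, hc, hc0⟩ := hc0ex
    exact ⟨hammingNorm c, Finset.mem_image_of_mem _
      (Finset.mem_filter.2 ⟨Finset.mem_univ _, hc, hc0⟩)⟩
  set d := (codeNZ.image hammingNorm).min' hcodeNZne with hddef
  have hdmem := (codeNZ.image hammingNorm).min'_mem hcodeNZne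
  rw [← hddef] at hdmem
  obtain ⟨cmin, hcmin, hcmineq⟩ := Finset.mem_image.1 hdmem
  rw [hcodeNZ, Finset.mem_filter] at hcmin
  have hdle : ∀ c ∈ C, c ≠ 0 → d ≤ hammingNorm c := by
    intro c hc hc0
    exact Finset.min'_le _ _ (Finset.mem_image_of_mem _
      (Finset.mem_filter.2 ⟨Finset.mem_univ _, hc, hc0⟩))
  -- ### locality
  have hlocal : ∀ j : Fin n, ∃ S : Finset (Fin n), j ∈ S ∧ S.card ≤ r + δ - 1 ∧
      ∀ c ∈ C, ∀ c' ∈ C, (∃ i ∈ S, c i ≠ c' i) →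
        δ ≤ (S.filter (fun i => c i ≠ c' i)).card := by
    intro j
    have hjm : (j : ℕ) / g < m := by
      rw [Nat.div_lt_iff_lt_mul hgpos]
      exact lt_of_lt_of_le j.isLt hmub
    by_cases hdead : (j : ℕ) / g + 1 = m ∧ ks = 0
    · -- dead coordinate: all codewords vanish here
      have hallz : ∀ c ∈ C, c j = 0 := by
        intro c hc
        obtain ⟨w, hwW, rfl⟩ := (hCmem c).1 hc
        rw [hE]
        apply encL_eq_zero_of_group_zero g r K n hrpos xx w j
        intro a ha
        exfalso
        have hKeq : K = (m - 1) * r := by omega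
        have h2 : (a : ℕ) / r < m - 1 := by
          rw [Nat.div_lt_iff_lt_mul hrpos]
          have := a.isLt
          omega
        omega
      refine ⟨{j}, Finset.mem_singleton_self j, by simp; omega, ?_⟩
      intro c hc c' hc' ⟨i0, hi0, hne⟩
      exfalso
      rw [Finset.mem_singleton] at hi0
      subst hi0
      rw [hallz c hc, hallz c' hc'] at hne
      exact hne rfl
    · -- live group
      set i := (j : ℕ) / g with hidef
      have hlive : i + 1 < m ∨ 0 < ks := by omega
      set S := Finset.univ.filter (fun t : Fin n => (t : ℕ) / g = i) with hSdef
      have hjS : j ∈ S := by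
        rw [hSdef, Finset.mem_filter]
        exact ⟨Finset.mem_univ _, rfl⟩
      have hScard : S.card ≤ r + δ - 1 := by
        have := hGub Finset.univ i
        rw [hSdef]
        omega
      refine ⟨S, hjS, hScard, ?_⟩
      intro c hc c' hc' ⟨i0, hi0, hne⟩
      by_contra hcon
      push_neg at hcon
      obtain ⟨w, hwW, rfl⟩ := (hCmem c).1 hc
      obtain ⟨w', hw'W, rfl⟩ := (hCmem c').1 hc'
      -- the difference vanishes on many positions of the group
      have hsplitS := Finset.card_filter_add_card_filter_not
        (s := S) (p := fun t : Fin n => E w t ≠ E w' t)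
      have hSeq : S.filter (fun t : Fin n => ¬ E w t ≠ E w' t)
          = S.filter (fun t : Fin n => E w t = E w' t) := by
        apply Finset.filter_congr
        intro t _
        simp
      rw [hSeq] at hsplitS
      set Z := S.filter (fun t : Fin n => E w t = E w' t) with hZdef
      have hZcard : min r (K - i * r) ≤ Z.card := by
        have h1 := hQbig i hjm hlive
        rw [← hSdef] at h1
        omega
      have hZg : ∀ t ∈ Z, (t : ℕ) / g = i := by
        intro t ht
        rw [hZdef, Finset.mem_filter, hSdef, Finset.mem_filter] at ht
        exact ht.1.2
      have hZz : ∀ t ∈ Z, E (w - w') t = 0 := by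
        intro t ht
        rw [hZdef, Finset.mem_filter] at ht
        rw [map_sub]
        simp only [Pi.sub_apply]
        rw [ht.2, sub_self]
      have hzero : ∀ a : Fin K, (a : ℕ) / r = i → (w - w') a = 0 := by
        refine lemA g r K n hgpos hrpos xx hxx (w - w') i Z hZg
          (fun t ht => by rw [← hE]; exact hZz t ht) ?_
        intro b hb hcard
        exfalso
        have h2 := hrowki b
        rw [hb] at h2
        omega
      have : E (w - w') i0 = 0 := by
        rw [hE]
        apply encL_eq_zero_of_group_zero g r K n hrpos xx (w - w') i0
        intro a ha
        apply hzero
        rw [ha]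
        rw [hSdef, Finset.mem_filter] at hi0
        exact hi0.2
      rw [map_sub] at this
      simp only [Pi.sub_apply] at this
      exact hne (sub_eq_zero.1 this)
  -- ### conclusion
  refine ⟨d, ?_, ?_⟩
  · exact ⟨C, hCrank, hdle, ⟨cmin, hcmin.2.1, hcmin.2.2, hcmineq⟩, hlocal⟩
  · -- distance bound
    have hwtmin := hwt cmin hcmin.2.1 hcmin.2.2
    rw [hcmineq] at hwtmin
    rw [doptZ, ← htsdef]
    have hcast : (↑(ts * (δ - 1)) : ℤ) = (ts : ℤ) * ((δ : ℤ) - 1) := by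
      push_cast [Nat.cast_sub (show 1 ≤ δ by omega)]
      ring
    have hring : ((ts : ℤ) - 1) * ((δ : ℤ) - 1)
        = (ts : ℤ) * ((δ : ℤ) - 1) - ((δ : ℤ) - 1) := by ring
    have hBZ : (B : ℤ) = (k : ℤ) + (ts : ℤ) * ((δ : ℤ) - 1) := by
      rw [hBdef]
      push_cast [hcast]
      ring
    have hn1 : (n : ℤ) + 1 ≤ (d : ℤ) + (B : ℤ) := by exact_mod_cast hwtmin
    rw [hBZ] at hn1
    linarith [hring, hn1]
end

section
/- For every integer i ≥ 1 there exists an optimal vector-linear (n,k,d,r)-LRC over F_2^2 with parameters (n,k,d,r) = (4i+4, 3i+2, 3, 3); that is, there exists an F_2-linear subspace C ⊆ (F_2^2)^{4i+4} with |C| = 4^{3i+2}, minimum Hamming distance 3 over the alphabet F_2^2, all-symbol locality r = 3, and 3 = n − k − ⌈k/r⌉ + 2. -/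
namespace LRC11


abbrev F4 := ZMod 2 × ZMod 2

def fmul (a x : F4) : F4 := (a.1*x.1 + a.2*x.2, a.1*x.2 + a.2*x.1 + a.2*x.2)

def lam : Fin 4 → F4 := ![(0,0),(1,0),(0,1),(1,1)]

lemma fmul_add (a x y : F4) : fmul a (x+y) = fmul a x + fmul a y := by revert a x y; decide
lemma fmul_smul (r : ZMod 2) (a x : F4) : fmul a (r • x) = r • fmul a x := by revert r a x; decide
lemma fmul_zero' (a : F4) : fmul a 0 = 0 := by revert a; decide
lemma fmul_zlam (x : F4) : fmul (lam 0) x = 0 := by revert x; decide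
lemma fmul_olam (x : F4) : fmul (lam 1) x = x := by revert x; decide
lemma F4_self_add (x : F4) : x + x = 0 := by revert x; decide
lemma F4_add_eq_zero (x y : F4) : x + y = 0 ↔ x = y := by revert x y; decide
lemma lam_inj (a b : Fin 4) (h : a ≠ b) : lam a ≠ lam b := by revert h; revert a b; decide
lemma fmul_ne (a b : Fin 4) (x : F4) (h : a ≠ b) (hx : x ≠ 0) :
    fmul (lam a) x + fmul (lam b) x ≠ 0 := by revert h hx; revert a b x; decide

variable (i : ℕ)

def Phi : (Fin (4*i+4) → F4) →ₗ[ZMod 2] (Fin (i+1) → F4) × F4 where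
  toFun c := (fun g => c ⟨4*g.val, by omega⟩ + c ⟨4*g.val+1, by omega⟩
      + c ⟨4*g.val+2, by omega⟩ + c ⟨4*g.val+3, by omega⟩,
    ∑ j, fmul (lam ⟨j.val % 4, by omega⟩) (c j))
  map_add' c c' := by
    refine Prod.ext ?_ ?_
    · funext g; simp only [Prod.fst_add, Pi.add_apply]; abel
    · simp only [Prod.snd_add, Pi.add_apply, fmul_add, Finset.sum_add_distrib]
  map_smul' r c := by
    refine Prod.ext ?_ ?_
    · funext g; simp only [RingHom.id_apply, Prod.smul_fst, Pi.smul_apply, smul_add]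
    · simp only [RingHom.id_apply, Prod.smul_snd, Pi.smul_apply, fmul_smul, Finset.smul_sum]

lemma mem_ker_iff (c : Fin (4*i+4) → F4) :
    c ∈ LinearMap.ker (Phi i) ↔
      ((∀ g : Fin (i+1), c ⟨4*g.val, by omega⟩ + c ⟨4*g.val+1, by omega⟩
          + c ⟨4*g.val+2, by omega⟩ + c ⟨4*g.val+3, by omega⟩ = 0) ∧
        ∑ j, fmul (lam ⟨j.val % 4, by omega⟩) (c j) = 0) := by
  rw [LinearMap.mem_ker, Phi, LinearMap.coe_mk, AddHom.coe_mk, Prod.mk_eq_zero, funext_iff]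
  simp [Pi.zero_apply]

lemma parity_of_mem (c : Fin (4*i+4) → F4) (hc : c ∈ LinearMap.ker (Phi i))
    (g : ℕ) (hg : g < i+1) :
    c ⟨4*g, by omega⟩ + c ⟨4*g+1, by omega⟩ + c ⟨4*g+2, by omega⟩ + c ⟨4*g+3, by omega⟩ = 0 :=
  ((mem_ker_iff i c).1 hc).1 ⟨g, hg⟩

lemma global_of_mem (c : Fin (4*i+4) → F4) (hc : c ∈ LinearMap.ker (Phi i)) :
    ∑ j, fmul (lam ⟨j.val % 4, by omega⟩) (c j) = 0 :=
  ((mem_ker_iff i c).1 hc).2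

/-- Surjectivity of the check map. -/
lemma Phi_surj : Function.Surjective (Phi i) := by
  rintro ⟨t, s⟩
  classical
  set c : Fin (4*i+4) → F4 := fun j =>
    if j.val % 4 = 0 then (t ⟨j.val / 4, by omega⟩ + if j.val / 4 = 0 then s else 0)
      else if j.val = 1 then s else 0 with hcdef
  have ceval : ∀ (a : ℕ) (h : a < 4*i+4), c ⟨a, h⟩ =
      if a % 4 = 0 then (t ⟨a / 4, by omega⟩ + if a / 4 = 0 then s else 0)
        else if a = 1 then s else 0 := fun a h => rfl
  refine ⟨c, ?_⟩
  refine Prod.ext ?_ ?_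
  · funext g
    show c ⟨4*g.val, by omega⟩ + c ⟨4*g.val+1, by omega⟩
        + c ⟨4*g.val+2, by omega⟩ + c ⟨4*g.val+3, by omega⟩ = t g
    rw [ceval, ceval, ceval, ceval,
      if_pos (show (4*g.val) % 4 = 0 by omega),
      if_neg (show ¬((4*g.val+1) % 4 = 0) by omega),
      if_neg (show ¬((4*g.val+2) % 4 = 0) by omega),
      if_neg (show ¬((4*g.val+3) % 4 = 0) by omega),
      if_neg (show ¬(4*g.val+2 = 1) by omega),
      if_neg (show ¬(4*g.val+3 = 1) by omega)]
    have hgfin : (⟨4*g.val/4, by omega⟩ : Fin (i+1)) = g := by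
      apply Fin.ext; show 4*g.val/4 = g.val; omega
    rw [hgfin]
    by_cases hg : g.val = 0
    · rw [if_pos (show 4*g.val/4 = 0 by omega), if_pos (show 4*g.val+1 = 1 by omega)]
      rw [add_zero, add_zero, add_assoc, F4_self_add, add_zero]
    · rw [if_neg (show ¬(4*g.val/4 = 0) by omega), if_neg (show ¬(4*g.val+1 = 1) by omega)]
      rw [add_zero, add_zero, add_zero, add_zero]
  · show ∑ j, fmul (lam ⟨j.val % 4, by omega⟩) (c j) = s
    rw [← Finset.sum_subset (Finset.subset_univ {(⟨1, by omega⟩ : Fin (4*i+4))})]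
    · rw [Finset.sum_singleton, ceval, if_neg (show ¬((1:ℕ) % 4 = 0) by omega), if_pos rfl]
      have h1 : (⟨(1:ℕ) % 4, by omega⟩ : Fin 4) = 1 := by apply Fin.ext; rfl
      rw [h1, fmul_olam]
    · intro j _ hj
      simp only [Finset.mem_singleton] at hj
      have hj1 : j.val ≠ 1 := fun h => hj (Fin.ext h)
      by_cases h4 : j.val % 4 = 0
      · have hl : (⟨j.val % 4, by omega⟩ : Fin 4) = 0 := by apply Fin.ext; show j.val % 4 = 0; exact h4
        rw [hl, fmul_zlam]
      · have : c j = 0 := by rw [hcdef]; simp only; rw [if_neg h4, if_neg hj1]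
        rw [this, fmul_zero']

lemma card_ker : Nat.card (LinearMap.ker (Phi i)) = 4 ^ (3*i+2) := by
  have hV : Nat.card (Fin (4*i+4) → F4) = 4 ^ (4*i+4) := by
    rw [Nat.card_pi, Finset.prod_const, Finset.card_univ, Fintype.card_fin]
    norm_num [Nat.card_eq_fintype_card]
  have hW : Nat.card ((Fin (i+1) → F4) × F4) = 4 ^ (i+2) := by
    rw [Nat.card_prod, Nat.card_pi, Finset.prod_const, Finset.card_univ, Fintype.card_fin]
    rw [show Nat.card F4 = 4 from by norm_num [Nat.card_eq_fintype_card]]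
    rw [← pow_succ]
  have hquot : Nat.card ((Fin (4*i+4) → F4) ⧸ LinearMap.ker (Phi i)) = 4 ^ (i+2) := by
    rw [Nat.card_congr (LinearMap.quotKerEquivRange (Phi i)).toEquiv, LinearMap.range_eq_top.2 (Phi_surj i)]
    rw [Nat.card_congr Submodule.topEquiv.toEquiv, hW]
  have := Submodule.card_eq_card_quotient_mul_card (LinearMap.ker (Phi i))
  rw [hV, hquot] at this
  have h4 : (0:ℕ) < 4 ^ (i+2) := by positivity
  have hpow : (4:ℕ) ^ (4*i+4) = 4 ^ (3*i+2) * 4 ^ (i+2) := by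
    rw [← pow_add]; congr 1; omega
  rw [hpow] at this
  exact Nat.eq_of_mul_eq_mul_right h4 this.symm


/-- every nonzero coordinate has a partner in its group -/
lemma partner (c : Fin (4*i+4) → F4) (hc : c ∈ LinearMap.ker (Phi i))
    (j : Fin (4*i+4)) (hj : c j ≠ 0) :
    ∃ j' : Fin (4*i+4), j' ≠ j ∧ j'.val/4 = j.val/4 ∧ c j' ≠ 0 := by
  by_contra h
  push_neg at h
  have key : ∀ (a : ℕ) (ha : a < 4*i+4), a/4 = j.val/4 →
      c ⟨a, ha⟩ = if a = j.val then c j else 0 := by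
    intro a ha hag
    split_ifs with h1
    · rw [show (⟨a, ha⟩ : Fin (4*i+4)) = j from Fin.ext h1]
    · exact h ⟨a, ha⟩ (Fin.ne_of_val_ne h1) hag
  have hpar := parity_of_mem i c hc (j.val/4) (by omega)
  rw [key (4*(j.val/4)) (by omega) (by omega), key (4*(j.val/4)+1) (by omega) (by omega),
    key (4*(j.val/4)+2) (by omega) (by omega), key (4*(j.val/4)+3) (by omega) (by omega)] at hpar
  apply hj
  have hm : j.val = 4*(j.val/4) ∨ j.val = 4*(j.val/4)+1 ∨ j.val = 4*(j.val/4)+2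
      ∨ j.val = 4*(j.val/4)+3 := by omega
  rcases hm with hm | hm | hm | hm
  · rw [if_pos hm.symm, if_neg (by omega), if_neg (by omega), if_neg (by omega)] at hpar
    rwa [add_zero, add_zero, add_zero] at hpar
  · rw [if_neg (by omega), if_pos hm.symm, if_neg (by omega), if_neg (by omega)] at hpar
    rwa [zero_add, add_zero, add_zero] at hpar
  · rw [if_neg (by omega), if_neg (by omega), if_pos hm.symm, if_neg (by omega)] at hpar
    rwa [zero_add, zero_add, add_zero] at hpar
  · rw [if_neg (by omega), if_neg (by omega), if_neg (by omega), if_pos hm.symm] at hpar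
    rwa [zero_add, zero_add, zero_add] at hpar

/-- the global check kills weight-2 words supported in one group -/
lemma final (c : Fin (4*i+4) → F4) (hc : c ∈ LinearMap.ker (Phi i))
    (j0 j1 : Fin (4*i+4)) (hne : j0 ≠ j1) (hg : j1.val/4 = j0.val/4)
    (heq : c j0 = c j1) (hj0 : c j0 ≠ 0)
    (hz : ∀ j, j ≠ j0 → j ≠ j1 → c j = 0) : False := by
  classical
  have hglob := global_of_mem i c hc
  rw [← Finset.sum_subset (Finset.subset_univ ({j0, j1} : Finset (Fin (4*i+4))))
    (by
      intro x _ hx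
      simp only [Finset.mem_insert, Finset.mem_singleton, not_or] at hx
      rw [hz x hx.1 hx.2, fmul_zero'])] at hglob
  rw [Finset.sum_pair hne, ← heq] at hglob
  have hmod : j0.val % 4 ≠ j1.val % 4 := by
    intro hmm
    exact hne (Fin.ext (by omega))
  exact fmul_ne _ _ _ (fun hf => hmod (by
    have := congrArg Fin.val hf
    simpa using this)) hj0 hglob

lemma dist3 (c : Fin (4*i+4) → F4) (hc : c ∈ LinearMap.ker (Phi i)) (hne : c ≠ 0) :
    3 ≤ hammingNorm c := by
  by_contra hlt
  push_neg at hlt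
  obtain ⟨j0, hj0⟩ : ∃ j, c j ≠ 0 := Function.ne_iff.1 hne
  obtain ⟨j1, hj1ne, hj1g, hj1⟩ := partner i c hc j0 hj0
  classical
  have hj0S : j0 ∈ Finset.univ.filter (fun j => c j ≠ 0) := by simp [hj0]
  have hj1S : j1 ∈ Finset.univ.filter (fun j => c j ≠ 0) := by simp [hj1]
  have hsub : ({j0, j1} : Finset (Fin (4*i+4))) ⊆ Finset.univ.filter (fun j => c j ≠ 0) := by
    intro x hx
    rcases Finset.mem_insert.1 hx with h | h
    · rwa [h]
    · rw [Finset.mem_singleton.1 h]; exact hj1S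
  have hcard2 : ({j0, j1} : Finset (Fin (4*i+4))).card = 2 := Finset.card_pair (Ne.symm hj1ne)
  have hnorm : hammingNorm c = (Finset.univ.filter (fun j => c j ≠ 0)).card := by
    simp [hammingNorm]
  have hSeq : ({j0, j1} : Finset (Fin (4*i+4))) = Finset.univ.filter (fun j => c j ≠ 0) := by
    apply Finset.eq_of_subset_of_card_le hsub
    rw [hcard2, ← hnorm]
    omega
  have hz : ∀ j, j ≠ j0 → j ≠ j1 → c j = 0 := by
    intro j h0 h1
    by_contra hcj
    have : j ∈ ({j0, j1} : Finset (Fin (4*i+4))) := by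
      rw [hSeq]; simp [hcj]
    simp only [Finset.mem_insert, Finset.mem_singleton] at this
    tauto
  have key : ∀ (a : ℕ) (ha : a < 4*i+4),
      c ⟨a, ha⟩ = if a = j0.val then c j0 else if a = j1.val then c j1 else 0 := by
    intro a ha
    split_ifs with h1 h2
    · rw [show (⟨a, ha⟩ : Fin (4*i+4)) = j0 from Fin.ext h1]
    · rw [show (⟨a, ha⟩ : Fin (4*i+4)) = j1 from Fin.ext h2]
    · exact hz _ (Fin.ne_of_val_ne h1) (Fin.ne_of_val_ne h2)
  have hpar := parity_of_mem i c hc (j0.val/4) (by omega)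
  rw [key (4*(j0.val/4)) (by omega), key (4*(j0.val/4)+1) (by omega),
    key (4*(j0.val/4)+2) (by omega), key (4*(j0.val/4)+3) (by omega)] at hpar
  have hj01 : j0.val ≠ j1.val := fun h => hj1ne (Fin.ext h.symm)
  have heq : c j0 = c j1 := by
    have hb0 : 4*(j0.val/4) ≤ j0.val ∧ j0.val < 4*(j0.val/4)+4 := by omega
    have hb1 : 4*(j0.val/4) ≤ j1.val ∧ j1.val < 4*(j0.val/4)+4 := by omega
    split_ifs at hpar <;>
      first
        | omega
        | (simp only [add_zero, zero_add] at hpar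
           first
             | exact (F4_add_eq_zero _ _).1 hpar
             | exact ((F4_add_eq_zero _ _).1 hpar).symm)
  exact final i c hc j0 j1 (Ne.symm hj1ne) hj1g heq hj0 hz


def w : Fin (4*i+4) → F4 := fun j =>
  if j.val = 1 then (1,1) else if j.val = 2 then (1,0) else if j.val = 3 then (0,1) else 0

lemma w_apply (j : Fin (4*i+4)) :
    w i j = if j.val = 1 then (1,1) else if j.val = 2 then (1,0) else if j.val = 3 then (0,1) else 0 := rfl

lemma w_ne : w i ≠ 0 := by
  intro h
  have := congrFun h ⟨1, by omega⟩
  rw [w_apply] at this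
  simp only [if_pos rfl] at this
  exact (by decide : ((1,1) : F4) ≠ 0) (by simpa using this)

lemma w_zero (a : ℕ) (h4 : 4 ≤ a) (ha : a < 4*i+4) : w i ⟨a, ha⟩ = 0 := by
  show (if a = 1 then ((1,1) : F4) else if a = 2 then (1,0) else if a = 3 then (0,1) else 0) = 0
  rw [if_neg (by omega), if_neg (by omega), if_neg (by omega)]

lemma w_mem : w i ∈ LinearMap.ker (Phi i) := by
  refine (mem_ker_iff i (w i)).2 ⟨?_, ?_⟩
  · intro g
    by_cases hg : g.val = 0
    · rw [w_apply, w_apply, w_apply, w_apply]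
      have e0 : 4*g.val = 0 := by omega
      rw [show ((⟨4*g.val, by omega⟩ : Fin (4*i+4)) : ℕ) = 4*g.val from rfl,
        show ((⟨4*g.val+1, by omega⟩ : Fin (4*i+4)) : ℕ) = 4*g.val+1 from rfl,
        show ((⟨4*g.val+2, by omega⟩ : Fin (4*i+4)) : ℕ) = 4*g.val+2 from rfl,
        show ((⟨4*g.val+3, by omega⟩ : Fin (4*i+4)) : ℕ) = 4*g.val+3 from rfl, e0]
      norm_num
      decide
    · rw [w_zero i (4*g.val) (by omega), w_zero i (4*g.val+1) (by omega),
        w_zero i (4*g.val+2) (by omega), w_zero i (4*g.val+3) (by omega)]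
      simp
  · rw [← Finset.sum_subset (Finset.subset_univ
      ({⟨1, by omega⟩, ⟨2, by omega⟩, ⟨3, by omega⟩} : Finset (Fin (4*i+4))))]
    · rw [Finset.sum_insert (by
          simp only [Finset.mem_insert, Finset.mem_singleton, not_or]
          exact ⟨Fin.ne_of_val_ne (by norm_num), Fin.ne_of_val_ne (by norm_num)⟩),
        Finset.sum_pair (Fin.ne_of_val_ne (show (2:ℕ) ≠ 3 by norm_num))]
      have e1 : fmul (lam ⟨((⟨1, show (1:ℕ) < 4*i+4 by omega⟩ : Fin (4*i+4)).val) % 4, by omega⟩)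
          (w i ⟨1, by omega⟩) = (1,1) := rfl
      have e2 : fmul (lam ⟨((⟨2, show (2:ℕ) < 4*i+4 by omega⟩ : Fin (4*i+4)).val) % 4, by omega⟩)
          (w i ⟨2, by omega⟩) = (0,1) := rfl
      have e3 : fmul (lam ⟨((⟨3, show (3:ℕ) < 4*i+4 by omega⟩ : Fin (4*i+4)).val) % 4, by omega⟩)
          (w i ⟨3, by omega⟩) = (1,0) := by
        rw [w_apply]; show fmul (lam 3) ((0,1) : F4) = (1,0); decide
      rw [e1, e2, e3]
      decide
    · intro x _ hx
      simp only [Finset.mem_insert, Finset.mem_singleton, not_or] at hx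
      have h1 : x.val ≠ 1 := fun h => hx.1 (Fin.ext h)
      have h2 : x.val ≠ 2 := fun h => hx.2.1 (Fin.ext h)
      have h3 : x.val ≠ 3 := fun h => hx.2.2 (Fin.ext h)
      rw [w_apply, if_neg h1, if_neg h2, if_neg h3, fmul_zero']

lemma w_norm : hammingNorm (w i) = 3 := by
  have hset : (Finset.univ.filter (fun j => w i j ≠ 0)) =
      ({⟨1, by omega⟩, ⟨2, by omega⟩, ⟨3, by omega⟩} : Finset (Fin (4*i+4))) := by
    ext j
    simp only [Finset.mem_filter, Finset.mem_univ, true_and, Finset.mem_insert,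
      Finset.mem_singleton]
    rw [w_apply]
    constructor
    · intro hj
      by_cases h1 : j.val = 1
      · exact Or.inl (Fin.ext h1)
      by_cases h2 : j.val = 2
      · exact Or.inr (Or.inl (Fin.ext h2))
      by_cases h3 : j.val = 3
      · exact Or.inr (Or.inr (Fin.ext h3))
      · rw [if_neg h1, if_neg h2, if_neg h3] at hj; exact absurd rfl hj
    · rintro (h | h | h) <;> rw [h] <;>
        first
          | exact (show (if (1:ℕ) = 1 then ((1,1):F4) else if (1:ℕ) = 2 then (1,0)
              else if (1:ℕ) = 3 then (0,1) else 0) ≠ 0 by decide)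
          | exact (show (if (2:ℕ) = 1 then ((1,1):F4) else if (2:ℕ) = 2 then (1,0)
              else if (2:ℕ) = 3 then (0,1) else 0) ≠ 0 by decide)
          | exact (show (if (3:ℕ) = 1 then ((1,1):F4) else if (3:ℕ) = 2 then (1,0)
              else if (3:ℕ) = 3 then (0,1) else 0) ≠ 0 by decide)
  rw [show hammingNorm (w i) = (Finset.univ.filter (fun j => w i j ≠ 0)).card from rfl, hset]
  rw [Finset.card_insert_of_notMem (by
      simp only [Finset.mem_insert, Finset.mem_singleton, not_or]
      exact ⟨Fin.ne_of_val_ne (by norm_num), Fin.ne_of_val_ne (by norm_num)⟩),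
    Finset.card_insert_of_notMem (by
      simp only [Finset.mem_singleton]
      exact Fin.ne_of_val_ne (show (2:ℕ) ≠ 3 by norm_num)),
    Finset.card_singleton]

set_option maxHeartbeats 1000000 in
lemma locality (j : Fin (4*i+4)) :
    ∃ S : Finset (Fin (4*i+4)), j ∈ S ∧ S.card ≤ 4 ∧
      ∀ c ∈ LinearMap.ker (Phi i), ∀ c' ∈ LinearMap.ker (Phi i),
        (∃ p ∈ S, c p ≠ c' p) → 2 ≤ (S.filter (fun p => c p ≠ c' p)).card := by
  classical
  refine ⟨({⟨4*(j.val/4), by omega⟩, ⟨4*(j.val/4)+1, by omega⟩,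
      ⟨4*(j.val/4)+2, by omega⟩, ⟨4*(j.val/4)+3, by omega⟩} : Finset (Fin (4*i+4))), ?_, ?_, ?_⟩
  · simp only [Finset.mem_insert, Finset.mem_singleton]
    have hm : j.val = 4*(j.val/4) ∨ j.val = 4*(j.val/4)+1 ∨ j.val = 4*(j.val/4)+2
        ∨ j.val = 4*(j.val/4)+3 := by omega
    rcases hm with h | h | h | h
    · exact Or.inl (Fin.ext h)
    · exact Or.inr (Or.inl (Fin.ext h))
    · exact Or.inr (Or.inr (Or.inl (Fin.ext h)))
    · exact Or.inr (Or.inr (Or.inr (Fin.ext h)))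
  · refine le_trans (Finset.card_insert_le _ _) (Nat.succ_le_succ ?_)
    refine le_trans (Finset.card_insert_le _ _) (Nat.succ_le_succ ?_)
    refine le_trans (Finset.card_insert_le _ _) (Nat.succ_le_succ ?_)
    exact le_of_eq (Finset.card_singleton _)
  · rintro c hc c' hc' ⟨p0, hp0S, hp0⟩
    have hdmem : c - c' ∈ LinearMap.ker (Phi i) := sub_mem hc hc'
    have hdp : ∀ p, (c p ≠ c' p) ↔ (c - c') p ≠ 0 := by
      intro p
      rw [Pi.sub_apply, sub_ne_zero]
    have hfeq : ∀ (T : Finset (Fin (4*i+4))), T.filter (fun p => c p ≠ c' p)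
        = T.filter (fun p => (c - c') p ≠ 0) :=
      fun T => Finset.filter_congr (fun p _ => hdp p)
    rw [hfeq]
    by_contra hlt
    push_neg at hlt
    have hp0d : (c - c') p0 ≠ 0 := (hdp p0).1 hp0
    set T := ({⟨4*(j.val/4), by omega⟩, ⟨4*(j.val/4)+1, by omega⟩,
      ⟨4*(j.val/4)+2, by omega⟩, ⟨4*(j.val/4)+3, by omega⟩} : Finset (Fin (4*i+4))) with hT
    have hp0f : p0 ∈ T.filter (fun p => (c - c') p ≠ 0) := Finset.mem_filter.2 ⟨hp0S, hp0d⟩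
    have hpos : 0 < (T.filter (fun p => (c - c') p ≠ 0)).card := Finset.card_pos.2 ⟨p0, hp0f⟩
    have h1 : (T.filter (fun p => (c - c') p ≠ 0)).card = 1 := by omega
    obtain ⟨a, ha⟩ := Finset.card_eq_one.1 h1
    have hpa : p0 = a := by
      have := hp0f; rw [ha] at this; exact Finset.mem_singleton.1 this
    subst hpa
    have hz : ∀ p ∈ T, p ≠ p0 → (c - c') p = 0 := by
      intro p hpT hpne
      by_contra hdpne
      have : p ∈ T.filter (fun p => (c - c') p ≠ 0) := Finset.mem_filter.2 ⟨hpT, hdpne⟩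
      rw [ha] at this
      exact hpne (Finset.mem_singleton.1 this)
    have mem0 : (⟨4*(j.val/4), by omega⟩ : Fin (4*i+4)) ∈ T := Finset.mem_insert_self _ _
    have mem1 : (⟨4*(j.val/4)+1, by omega⟩ : Fin (4*i+4)) ∈ T :=
      Finset.mem_insert_of_mem (Finset.mem_insert_self _ _)
    have mem2 : (⟨4*(j.val/4)+2, by omega⟩ : Fin (4*i+4)) ∈ T :=
      Finset.mem_insert_of_mem (Finset.mem_insert_of_mem (Finset.mem_insert_self _ _))
    have mem3 : (⟨4*(j.val/4)+3, by omega⟩ : Fin (4*i+4)) ∈ T :=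
      Finset.mem_insert_of_mem (Finset.mem_insert_of_mem
        (Finset.mem_insert_of_mem (Finset.mem_singleton_self _)))
    have hpar := parity_of_mem i (c - c') hdmem (j.val/4) (by omega)
    have hp0T := hp0S
    rw [hT] at hp0T
    simp only [Finset.mem_insert, Finset.mem_singleton] at hp0T
    rcases hp0T with h | h | h | h
    · have z1 : (c - c') (⟨4*(j.val/4)+1, by omega⟩ : Fin (4*i+4)) = 0 := hz _ mem1 (by rw [h]; simp only [ne_eq, Fin.mk.injEq]; omega)
      have z2 : (c - c') (⟨4*(j.val/4)+2, by omega⟩ : Fin (4*i+4)) = 0 := hz _ mem2 (by rw [h]; simp only [ne_eq, Fin.mk.injEq]; omega)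
      have z3 : (c - c') (⟨4*(j.val/4)+3, by omega⟩ : Fin (4*i+4)) = 0 := hz _ mem3 (by rw [h]; simp only [ne_eq, Fin.mk.injEq]; omega)
      rw [z1, z2, z3] at hpar
      simp only [zero_add, add_zero] at hpar
      rw [← h] at hpar
      exact hp0d hpar
    · have z0 : (c - c') (⟨4*(j.val/4), by omega⟩ : Fin (4*i+4)) = 0 := hz _ mem0 (by rw [h]; simp only [ne_eq, Fin.mk.injEq]; omega)
      have z2 : (c - c') (⟨4*(j.val/4)+2, by omega⟩ : Fin (4*i+4)) = 0 := hz _ mem2 (by rw [h]; simp only [ne_eq, Fin.mk.injEq]; omega)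
      have z3 : (c - c') (⟨4*(j.val/4)+3, by omega⟩ : Fin (4*i+4)) = 0 := hz _ mem3 (by rw [h]; simp only [ne_eq, Fin.mk.injEq]; omega)
      rw [z0, z2, z3] at hpar
      simp only [zero_add, add_zero] at hpar
      rw [← h] at hpar
      exact hp0d hpar
    · have z0 : (c - c') (⟨4*(j.val/4), by omega⟩ : Fin (4*i+4)) = 0 := hz _ mem0 (by rw [h]; simp only [ne_eq, Fin.mk.injEq]; omega)
      have z1 : (c - c') (⟨4*(j.val/4)+1, by omega⟩ : Fin (4*i+4)) = 0 := hz _ mem1 (by rw [h]; simp only [ne_eq, Fin.mk.injEq]; omega)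
      have z3 : (c - c') (⟨4*(j.val/4)+3, by omega⟩ : Fin (4*i+4)) = 0 := hz _ mem3 (by rw [h]; simp only [ne_eq, Fin.mk.injEq]; omega)
      rw [z0, z1, z3] at hpar
      simp only [zero_add, add_zero] at hpar
      rw [← h] at hpar
      exact hp0d hpar
    · have z0 : (c - c') (⟨4*(j.val/4), by omega⟩ : Fin (4*i+4)) = 0 := hz _ mem0 (by rw [h]; simp only [ne_eq, Fin.mk.injEq]; omega)
      have z1 : (c - c') (⟨4*(j.val/4)+1, by omega⟩ : Fin (4*i+4)) = 0 := hz _ mem1 (by rw [h]; simp only [ne_eq, Fin.mk.injEq]; omega)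
      have z2 : (c - c') (⟨4*(j.val/4)+2, by omega⟩ : Fin (4*i+4)) = 0 := hz _ mem2 (by rw [h]; simp only [ne_eq, Fin.mk.injEq]; omega)
      rw [z0, z1, z2] at hpar
      simp only [zero_add, add_zero] at hpar
      rw [← h] at hpar
      exact hp0d hpar

end LRC11


/-- A vector-linear `(n, k, d, r)`-LRC over the alphabet `𝔽₂² = ZMod 2 × ZMod 2`:
an `𝔽₂`-linear subspace `C ⊆ (𝔽₂²)ⁿ` with `|C| = 4^k`, whose minimum Hamming distance
over the alphabet `𝔽₂²` is exactly `d`, and such that every coordinate `j` has a repair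
set `S` with `j ∈ S`, `|S| ≤ r + 1`, for which the projection of `C` to the coordinates
in `S` has minimum Hamming distance at least `2`. -/
def IsVectorLinearLRC (n k d r : ℕ) : Prop :=
  ∃ C : Submodule (ZMod 2) (Fin n → ZMod 2 × ZMod 2),
    Nat.card ↥C = 4 ^ k ∧
    (∀ c ∈ C, c ≠ 0 → d ≤ hammingNorm c) ∧
    (∃ c ∈ C, c ≠ 0 ∧ hammingNorm c = d) ∧
    (∀ j : Fin n, ∃ S : Finset (Fin n), j ∈ S ∧ S.card ≤ r + 1 ∧
      ∀ c ∈ C, ∀ c' ∈ C, (∃ i ∈ S, c i ≠ c' i) →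
        2 ≤ (S.filter (fun i => c i ≠ c' i)).card)


theorem stmt_11 (i : ℕ) (hi : 1 ≤ i) :
    IsVectorLinearLRC (4 * i + 4) (3 * i + 2) 3 3 ∧
      (3 : ℤ) = ((4 * i + 4 : ℕ) : ℤ) - ((3 * i + 2 : ℕ) : ℤ) - ((((3 * i + 2) + 3 - 1) / 3 : ℕ) : ℤ) + 2 := by
  constructor
  · exact ⟨LinearMap.ker (LRC11.Phi i), LRC11.card_ker i,
      fun c hc hne => LRC11.dist3 i c hc hne,
      ⟨LRC11.w i, LRC11.w_mem i, LRC11.w_ne i, LRC11.w_norm i⟩,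
      fun j => LRC11.locality i j⟩
  · have h : ((3*i+2)+3-1)/3 = i+1 := by omega
    rw [h]
    push_cast
    ring
end

section
/- Let δ ≥ 2, let G be a k×s matrix over F_q of rank t = s − δ + 1 ≥ 1, and suppose that every set of t columns of G spans the column space of G. Then the first t columns x_1, …, x_t of G are linearly independent and there exists a t×(δ−1) matrix B over F_q, every square submatrix of which is invertible, such that G = (x_1|…|x_t)·(I_t | B), where I_t is the t×t identity matrix. -/
open Matrix

theorem stmt_13 (F : Type) [Field F] [Fintype F] [DecidableEq F]
    (k s t δ : ℕ) (hδ : 2 ≤ δ) (ht : 1 ≤ t) (hst : s + 1 = t + δ)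
    (G : Matrix (Fin k) (Fin s) F)
    (hrank : G.rank = t)
    (hspan : ∀ T : Finset (Fin s), T.card = t →
      Submodule.span F (Set.image (fun j => G.transpose j) (T : Set (Fin s))) =
        Submodule.span F (Set.range fun j => G.transpose j)) :
    LinearIndependent F (fun j : Fin t => G.transpose (Fin.castLE (by omega) j)) ∧
    ∃ B : Matrix (Fin t) (Fin (δ - 1)) F,
      (∀ (m : ℕ) (ρ : Fin m → Fin t) (σ : Fin m → Fin (δ - 1)),
        Function.Injective ρ → Function.Injective σ → IsUnit (B.submatrix ρ σ)) ∧
      G.submatrix id (Fin.cast (by omega : t + (δ - 1) = s) ∘ finSumFinEquiv) =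
        (G.submatrix id (Fin.castLE (by omega : t ≤ s))) * Matrix.fromCols 1 B := by
  classical
  have hts : t ≤ s := by omega
  set c : Fin s → (Fin k → F) := fun j => G.transpose j with hc
  -- finrank of the full column span is t
  have hfr : Module.finrank F (Submodule.span F (Set.range c)) = t := by
    rw [← hrank, Matrix.rank_eq_finrank_span_cols]
    rfl
  -- any injective choice of t columns is linearly independent
  have hli : ∀ (ι : Type) [Fintype ι], Fintype.card ι = t → ∀ f : ι → Fin s,
      Function.Injective f → LinearIndependent F (c ∘ f) := by
    intro ι _ hcard f hf
    rw [linearIndependent_iff_card_eq_finrank_span]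
    have hT : (Finset.image f Finset.univ).card = t := by
      rw [Finset.card_image_of_injective _ hf, Finset.card_univ, hcard]
    have hsp := hspan (Finset.image f Finset.univ) hT
    have himg : (fun j => G.transpose j) '' ((Finset.image f Finset.univ : Finset (Fin s)) : Set (Fin s))
        = Set.range (c ∘ f) := by
      rw [Finset.coe_image, Finset.coe_univ, Set.image_univ, ← Set.range_comp]
    rw [himg] at hsp
    rw [hcard, Set.finrank, hsp]
    exact hfr.symm
  -- first t columns
  set e : Fin t → Fin s := Fin.castLE hts with he
  have he_inj : Function.Injective e := Fin.castLE_injective hts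
  have li0 : LinearIndependent F (c ∘ e) := hli (Fin t) (Fintype.card_fin t) e he_inj
  refine ⟨li0, ?_⟩
  -- the span of the first t columns is everything
  set V : Submodule F (Fin k → F) := Submodule.span F (Set.range (c ∘ e)) with hV
  have hVfull : V = Submodule.span F (Set.range c) := by
    have hT : (Finset.image e Finset.univ).card = t := by
      rw [Finset.card_image_of_injective _ he_inj, Finset.card_univ, Fintype.card_fin]
    have hsp := hspan (Finset.image e Finset.univ) hT
    have himg : (fun j => G.transpose j) '' ((Finset.image e Finset.univ : Finset (Fin s)) : Set (Fin s))
        = Set.range (c ∘ e) := by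
      rw [Finset.coe_image, Finset.coe_univ, Set.image_univ, ← Set.range_comp]
    rw [himg] at hsp
    exact hsp
  -- later column indices
  have hidx : ∀ j : Fin (δ - 1), t + (j : ℕ) < s := by
    intro j
    have := j.isLt
    omega
  set idx : Fin (δ - 1) → Fin s := fun j => ⟨t + (j : ℕ), hidx j⟩ with hidxdef
  have hmem : ∀ j : Fin (δ - 1), c (idx j) ∈ V := by
    intro j
    rw [hVfull]
    exact Submodule.subset_span (Set.mem_range_self _)
  -- basis of V from the first t columns
  set bV : Module.Basis (Fin t) F V := Module.Basis.span li0 with hbV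
  set B : Matrix (Fin t) (Fin (δ - 1)) F :=
    fun i j => bV.repr ⟨c (idx j), hmem j⟩ i with hB
  -- defining property of B
  have key : ∀ j : Fin (δ - 1), c (idx j) = ∑ i : Fin t, B i j • c (e i) := by
    intro j
    have h1 := bV.sum_repr ⟨c (idx j), hmem j⟩
    have h2 : ((∑ i : Fin t, bV.repr ⟨c (idx j), hmem j⟩ i • bV i : V) : Fin k → F)
        = c (idx j) := congrArg Subtype.val h1
    rw [← h2, Submodule.coe_sum]
    refine Finset.sum_congr rfl fun i _ => ?_
    rw [SetLike.val_smul]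
    congr 1
    exact congrArg Subtype.val (Module.Basis.span_apply li0 i)
  refine ⟨B, ?_, ?_⟩
  · -- every square submatrix of B is invertible
    intro m ρ σ hρ hσ
    rw [Matrix.isUnit_iff_isUnit_det, isUnit_iff_ne_zero]
    intro hdet
    obtain ⟨v, hv0, hv⟩ := (Matrix.exists_mulVec_eq_zero_iff).2 hdet
    -- row sums vanish on the range of ρ
    have hrow : ∀ i0 : Fin m, ∑ j : Fin m, v j * B (ρ i0) (σ j) = 0 := by
      intro i0
      have := congrFun hv i0
      simpa [Matrix.mulVec, dotProduct, Matrix.submatrix_apply, mul_comm] using this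
    set A : Fin t → F := fun i => ∑ j : Fin m, v j * B i (σ j) with hA
    have hAzero : ∀ i : Fin t, i ∈ Set.range ρ → A i = 0 := by
      rintro i ⟨i0, rfl⟩
      exact hrow i0
    -- build a dependent family of t columns
    have hmlet : m ≤ t := Fintype.card_fin m ▸ Fintype.card_fin t ▸
      Fintype.card_le_of_injective ρ hρ
    have eqv : ({i : Fin t // i ∉ Set.range ρ} ⊕ Fin m) ≃ Fin t :=
      ((Equiv.refl _).sumCongr (Equiv.ofInjective ρ hρ)).trans
        ((Equiv.sumComm _ _).trans (Equiv.sumCompl (fun i => i ∈ Set.range ρ)))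
    have hcard : Fintype.card ({i : Fin t // i ∉ Set.range ρ} ⊕ Fin m) = t :=
      (Fintype.card_congr eqv).trans (Fintype.card_fin t)
    set f : {i : Fin t // i ∉ Set.range ρ} ⊕ Fin m → Fin s := Sum.elim (fun i => e i.1) (fun j => idx (σ j)) with hf
    have hf_inj : Function.Injective f := by
      rintro (⟨i1, h1⟩ | j1) (⟨i2, h2⟩ | j2) hfe
      · simp only [hf, Sum.elim_inl] at hfe
        exact congrArg Sum.inl (Subtype.ext (he_inj hfe))
      · exfalso
        have h1 : ((e i1 : Fin s) : ℕ) = (i1 : ℕ) := rfl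
        have h2 : ((idx (σ j2) : Fin s) : ℕ) = t + ((σ j2 : Fin (δ-1)) : ℕ) := rfl
        have := congrArg (fun x : Fin s => (x : ℕ)) hfe
        simp only [hf, Sum.elim_inl, Sum.elim_inr, h1, h2] at this
        have := i1.isLt
        omega
      · exfalso
        have h1 : ((e i2 : Fin s) : ℕ) = (i2 : ℕ) := rfl
        have h2 : ((idx (σ j1) : Fin s) : ℕ) = t + ((σ j1 : Fin (δ-1)) : ℕ) := rfl
        have := congrArg (fun x : Fin s => (x : ℕ)) hfe
        simp only [hf, Sum.elim_inl, Sum.elim_inr, h1, h2] at this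
        have := i2.isLt
        omega
      · simp only [hf, Sum.elim_inr] at hfe
        have : ((σ j1 : Fin (δ-1)) : ℕ) = ((σ j2 : Fin (δ-1)) : ℕ) := by
          have := congrArg (fun x : Fin s => (x : ℕ)) hfe
          simp only [hidxdef] at this
          omega
        exact congrArg Sum.inr (hσ (Fin.ext this))
    have hliι : LinearIndependent F (c ∘ f) := hli ({i : Fin t // i ∉ Set.range ρ} ⊕ Fin m) hcard f hf_inj
    set g : {i : Fin t // i ∉ Set.range ρ} ⊕ Fin m → F := Sum.elim (fun i => -(A i.1)) (fun j => v j) with hg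
    have hsum : ∑ x : {i : Fin t // i ∉ Set.range ρ} ⊕ Fin m, g x • (c ∘ f) x = 0 := by
      rw [Fintype.sum_sum_type]
      have hinr : ∑ j : Fin m, g (Sum.inr j) • (c ∘ f) (Sum.inr j)
          = ∑ i : Fin t, A i • c (e i) := by
        simp only [hg, hf, Sum.elim_inr, Function.comp_apply]
        calc ∑ j : Fin m, v j • c (idx (σ j))
            = ∑ j : Fin m, ∑ i : Fin t, (v j * B i (σ j)) • c (e i) := by
              refine Finset.sum_congr rfl fun j _ => ?_
              rw [key (σ j), Finset.smul_sum]
              exact Finset.sum_congr rfl fun i _ => by rw [smul_smul]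
          _ = ∑ i : Fin t, (∑ j : Fin m, v j * B i (σ j)) • c (e i) := by
              rw [Finset.sum_comm]
              exact Finset.sum_congr rfl fun i _ => (Finset.sum_smul).symm
          _ = ∑ i : Fin t, A i • c (e i) := rfl
      have hreduce : ∑ i : Fin t, A i • c (e i)
          = ∑ i : {i : Fin t // i ∉ Set.range ρ}, A i.1 • c (e i.1) := by
        rw [← Finset.sum_subtype (Finset.univ.filter (fun i : Fin t => i ∉ Set.range ρ))
          (fun i => by simp) (fun i => A i • c (e i))]
        symm
        apply Finset.sum_subset (Finset.filter_subset _ _)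
        intro i _ hni
        simp only [Finset.mem_filter, Finset.mem_univ, true_and, not_not] at hni
        rw [hAzero i hni, zero_smul]
      have hinl : ∑ i : {i : Fin t // i ∉ Set.range ρ}, g (Sum.inl i) • (c ∘ f) (Sum.inl i)
          = -∑ i : {i : Fin t // i ∉ Set.range ρ}, A i.1 • c (e i.1) := by
        rw [← Finset.sum_neg_distrib]
        refine Finset.sum_congr rfl fun i _ => ?_
        simp [hg, hf, neg_smul]
      rw [hinl, hinr, hreduce]
      exact neg_add_cancel _
    have hall := Fintype.linearIndependent_iff.1 hliι g hsum
    obtain ⟨j0, hj0⟩ := Function.ne_iff.1 hv0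
    exact hj0 (hall (Sum.inr j0))
  · -- the matrix factorization
    rw [Matrix.mul_fromCols, Matrix.mul_one]
    ext a x
    cases x with
    | inl i =>
      have : (Fin.cast (by omega : t + (δ - 1) = s) ∘ finSumFinEquiv) (Sum.inl i) = e i := by
        apply Fin.ext
        simp [e]
      simp only [Matrix.submatrix_apply, Matrix.fromCols_apply_inl, this, id]
    | inr j =>
      have hx : (Fin.cast (by omega : t + (δ - 1) = s) ∘ finSumFinEquiv) (Sum.inr j) = idx j := by
        apply Fin.ext
        simp [idx]
      have hkey := congrFun (key j) a
      simp only [Finset.sum_apply, Pi.smul_apply, smul_eq_mul] at hkey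
      simp only [Matrix.submatrix_apply, Matrix.fromCols_apply_inr, hx, id,
        Matrix.mul_apply]
      rw [show (G a (idx j) : F) = c (idx j) a from rfl, hkey]
      refine Finset.sum_congr rfl fun i _ => ?_
      rw [mul_comm]
      rfl
end
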